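/- arXiv:1110.0141 — 4 statements merged into one kernel-verified Lean document; each statement's English description precedes it below -/
import Mathlib

section
/- Assume Schanuel's conjecture: for any complex numbers z_1, ..., z_n that are linearly independent over ℚ, the field ℚ(z_1, ..., z_n, e^{z_1}, ..., e^{z_n}) has transcendence degree at least n over ℚ. Then: if x_1, ..., x_n are real numbers linearly independent over ℚ such that each e^{x_i} is algebraic over ℚ, the numbers x_1, ..., x_n are algebraically independent over ℚ. -/
/-- Schanuel's conjecture: if `z₁,…,zₙ ∈ ℂ` are linearly independent over `ℚ`,
then the field `ℚ(z₁,…,zₙ, e^{z₁},…,e^{zₙ})` has transcendence degree at least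
`n` over `ℚ`, i.e. among the generators `zᵢ, e^{zᵢ}` one can find `n` elements
that are algebraically independent over `ℚ`. -/
def SchanuelConjecture : Prop :=
  ∀ (n : ℕ) (z : Fin n → ℂ), LinearIndependent ℚ z →
    ∃ s : Finset ℂ,
      (s : Set ℂ) ⊆ Set.range z ∪ Set.range (fun i => Complex.exp (z i)) ∧
      s.card = n ∧ AlgebraicIndependent ℚ (fun x : (s : Set ℂ) => (x : ℂ))

/-- Assuming Schanuel's conjecture, if `x₁,…,xₙ` are real numbers linearly
independent over `ℚ` such that each `e^{xᵢ}` is algebraic over `ℚ`, then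
`x₁,…,xₙ` are algebraically independent over `ℚ`. -/
theorem algebraicIndependent_of_linearIndependent_log_algebraic
    (hSch : SchanuelConjecture) (n : ℕ) (x : Fin n → ℝ)
    (hx : LinearIndependent ℚ x)
    (halg : ∀ i, IsAlgebraic ℚ (Real.exp (x i))) :
    AlgebraicIndependent ℚ x := by
  set z : Fin n → ℂ := fun i => (x i : ℂ) with hz
  have hzli : LinearIndependent ℚ z := by
    have := hx.map' ((Complex.ofRealAm.toLinearMap.restrictScalars ℚ))
      (LinearMap.ker_eq_bot.2 (by exact fun a b h => Complex.ofReal_injective h))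
    exact this
  obtain ⟨s, hsub, hcard, hindep⟩ := hSch n z hzli
  -- each element of s is transcendental, but exp (z i) is algebraic
  have hzalg : ∀ i, IsAlgebraic ℚ (Complex.exp (z i)) := by
    intro i
    have : Complex.exp (z i) = ((Real.exp (x i) : ℝ) : ℂ) := by
      simp [hz, Complex.ofReal_exp]
    rw [this]
    exact (halg i).algebraMap
  have hsubz : (s : Set ℂ) ⊆ Set.range z := by
    intro a ha
    rcases hsub ha with h | h
    · exact h
    · exfalso
      rcases h with ⟨i, rfl⟩
      exact hindep.transcendental (⟨_, ha⟩ : (s : Set ℂ)) (hzalg i)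
  -- z is injective
  have hzinj : Function.Injective z := hzli.injective
  -- s = image of z
  have hseq : s = Finset.univ.image z := by
    apply Finset.eq_of_subset_of_card_le
    · intro a ha
      rcases hsubz ha with ⟨i, rfl⟩
      exact Finset.mem_image_of_mem z (Finset.mem_univ i)
    · rw [Finset.card_image_of_injective _ hzinj, Finset.card_univ, Fintype.card_fin, hcard]
  have hmem : ∀ i, z i ∈ (s : Set ℂ) := by
    intro i
    rw [hseq]
    simp
  -- z is algebraically independent
  have hzind : AlgebraicIndependent ℚ z := by
    have hcomp : AlgebraicIndependent ℚ
        ((fun a : (s : Set ℂ) => (a : ℂ)) ∘ fun i => (⟨z i, hmem i⟩ : (s : Set ℂ))) :=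
      hindep.comp _ (fun i j h => hzinj (by simpa using congrArg Subtype.val h))
    exact hcomp
  exact AlgebraicIndependent.of_comp (Complex.ofRealAm.restrictScalars ℚ) hzind
end

section
/- Assume Schanuel's conjecture. Let 𝒦 ⊆ ℂ be a subfield of transcendence degree at most d over ℚ, and let z_1, ..., z_n be complex numbers linearly independent over ℚ such that each e^{z_i} is algebraic over 𝒦. Then the transcendence degree of ℚ(z_1, ..., z_n) over ℚ is at least n − d. -/
section SchanuelAux
open IntermediateField


theorem isAlgebraic_ring_adjoin_of_field_adjoin {F E : Type*} [Field F] [Field E] [Algebra F E]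
    (S : Set E) {y : E} (h : IsAlgebraic (IntermediateField.adjoin F S) y) :
    IsAlgebraic (Algebra.adjoin F S) y := by
  set A := Algebra.adjoin F S with hA
  set K := IntermediateField.adjoin F S with hK
  letI : Algebra A K := (Subalgebra.inclusion (algebra_adjoin_le_adjoin F S)).toAlgebra
  haveI : IsScalarTower A K E := .of_algebraMap_eq fun _ ↦ rfl
  have key : ∀ x : A, ((algebraMap A K x : K) : E) = (x : E) := fun _ => rfl
  have hmem : ∀ p : MvPolynomial S F, MvPolynomial.aeval (Subtype.val : S → E) p ∈ A := by
    intro p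
    have h1 : (MvPolynomial.aeval (Subtype.val : S → E)).range = Algebra.adjoin F S := by
      rw [← Algebra.adjoin_range_eq_range_aeval, Subtype.range_coe]
    rw [hA, ← h1]
    exact ⟨p, rfl⟩
  haveI : IsFractionRing A K := by
    constructor
    constructor
    · rintro ⟨a, ha⟩
      rw [isUnit_iff_ne_zero]
      intro hz
      have h0 : (a : E) = 0 := by rw [← key a, hz]; rfl
      exact nonZeroDivisors.ne_zero ha (Subtype.ext h0)
    · rintro z
      obtain ⟨r, s, hz⟩ := (IntermediateField.mem_adjoin_iff F (z : E)).1 z.2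
      by_cases h0 : MvPolynomial.aeval (Subtype.val : S → E) s = 0
      · have hz0 : (z : E) = 0 := by rw [hz, h0, div_zero]
        refine ⟨⟨0, 1⟩, Subtype.ext ?_⟩
        show (z : E) * _ = _
        rw [hz0, zero_mul]; rfl
      · refine ⟨⟨⟨_, hmem r⟩, ⟨⟨_, hmem s⟩,
          mem_nonZeroDivisors_of_ne_zero (fun hc => h0 (congrArg Subtype.val hc))⟩⟩,
          Subtype.ext ?_⟩
        show (z : E) * ((algebraMap A K _ : K) : E) = ((algebraMap A K _ : K) : E)
        rw [key, key, hz]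
        exact div_mul_cancel₀ _ h0
    · intro x y hxy
      have : (x : E) = (y : E) := by rw [← key x, ← key y, hxy]
      exact ⟨1, by rw [Subtype.ext this]⟩
  exact (IsFractionRing.isAlgebraic_iff A K E).mpr h

theorem isAlg_mono {F E : Type*} [Field F] [Field E] [Algebra F E] {S T : Set E} (h : S ⊆ T)
    {y : E} (hy : IsAlgebraic (adjoin F S) y) : IsAlgebraic (adjoin F T) y :=
  IsAlgebraic.tower_top_of_subalgebra_le
    (show (adjoin F S).toSubalgebra ≤ (adjoin F T).toSubalgebra from
      fun x hx => adjoin.mono F S T h hx) hy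

theorem isAlg_trans_set {F E : Type*} [Field F] [Field E] [Algebra F E] (S : Set E)
    (hS : ∀ x ∈ S, IsAlgebraic F x) {y : E} (hy : IsAlgebraic (adjoin F S) y) :
    IsAlgebraic F y := by
  haveI : Algebra.IsAlgebraic F (adjoin F S) :=
    isAlgebraic_adjoin (fun x hx => (hS x hx).isIntegral)
  haveI : Algebra.IsIntegral F (adjoin F S) := Algebra.isAlgebraic_iff_isIntegral.mp this
  exact (isIntegral_trans y hy.isIntegral).isAlgebraic

theorem exchange {F E : Type*} [Field F] [Field E] [Algebra F E] {b y : E}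
    (h1 : IsAlgebraic (adjoin F ({b} : Set E)) y) (h2 : ¬ IsAlgebraic F y) :
    IsAlgebraic (adjoin F ({y} : Set E)) b := by
  by_cases hb : IsAlgebraic F b
  · exact absurd (isAlg_trans_set _ (by simpa using hb) h1) h2
  by_contra hby
  have hby' : Transcendental (Algebra.adjoin F ({y} : Set E)) b := fun halg =>
    hby (halg.tower_top_of_subalgebra_le (algebra_adjoin_le_adjoin F {y}))
  have hyind : AlgebraicIndependent F (fun _ : Unit => y) :=
    algebraicIndependent_unique_type_iff.mpr h2
  have pair : AlgebraicIndependent F (fun o : Option Unit => o.elim b (fun _ : Unit => y)) := by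
    rw [hyind.option_iff_transcendental]
    rwa [Set.range_const]
  have pair2 : AlgebraicIndependent F (fun o : Option Unit => o.elim y (fun _ : Unit => b)) := by
    have h := pair.comp (Equiv.swap none (some ())) (Equiv.injective _)
    convert h using 1
    funext o
    rcases o with _ | u
    · simp
    · simp
  have hbind : AlgebraicIndependent F (fun _ : Unit => b) :=
    algebraicIndependent_unique_type_iff.mpr hb
  have htr : Transcendental (Algebra.adjoin F (Set.range (fun _ : Unit => b))) y :=
    (hbind.option_iff_transcendental y).mp pair2
  rw [Set.range_const] at htr
  exact htr (isAlgebraic_ring_adjoin_of_field_adjoin _ h1)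

theorem algind_insert_iff {F E : Type*} [Field F] [Field E] [Algebra F E] {T : Set E}
    (hT : AlgebraicIndependent F ((↑) : T → E)) {x : E} (hx : x ∉ T) :
    AlgebraicIndependent F (fun z : (insert x T : Set E) => (z : E)) ↔
      Transcendental (Algebra.adjoin F T) x := by
  letI := Classical.decEq E
  have hfam : (fun z : (insert x T : Set E) => (z : E)) =
      (fun o : Option T => o.elim x (↑)) ∘ (Set.subtypeInsertEquivOption hx) := by
    funext z
    by_cases h : (z : E) = x <;> simp [Set.subtypeInsertEquivOption, h]
  rw [hfam, algebraicIndependent_equiv, hT.option_iff_transcendental, Subtype.range_coe]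

open Classical in

theorem card_le_of_algebraic :
    ∀ (k : ℕ) (t B : Finset ℂ), (t \ B).card = k →
      AlgebraicIndependent ℚ (fun z : (t : Set ℂ) => (z : ℂ)) →
      (∀ y ∈ t, IsAlgebraic (adjoin ℚ (B : Set ℂ)) y) → t.card ≤ B.card := by
  intro k
  induction k using Nat.strong_induction_on with
  | _ k IH =>
  intro t B hk ht hB
  by_cases hsub : t ⊆ B
  · exact Finset.card_le_card hsub
  obtain ⟨y, hyt, hyB⟩ := Finset.not_subset.1 hsub
  have hyerase : y ∉ ((t.erase y : Finset ℂ) : Set ℂ) := by simp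
  have htE : AlgebraicIndependent ℚ (fun z : ((t.erase y : Finset ℂ) : Set ℂ) => (z : ℂ)) :=
    ht.mono (by exact_mod_cast Finset.erase_subset y t)
  have hins : (insert y (((t.erase y : Finset ℂ) : Set ℂ))) = (t : Set ℂ) := by
    rw [← Finset.coe_insert, Finset.insert_erase hyt]
  have ht' : AlgebraicIndependent ℚ
      (fun z : (insert y ((t.erase y : Finset ℂ) : Set ℂ) : Set ℂ) => (z : ℂ)) := by
    rw [hins]; exact ht
  have htr : Transcendental (Algebra.adjoin ℚ ((t.erase y : Finset ℂ) : Set ℂ)) y :=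
    (algind_insert_iff htE hyerase).mp ht'
  have htrF : ¬ IsAlgebraic (adjoin ℚ ((t.erase y : Finset ℂ) : Set ℂ)) y := fun h =>
    htr (isAlgebraic_ring_adjoin_of_field_adjoin _ h)
  set C := B ∩ t with hC
  have hCB : C ⊆ B := Finset.inter_subset_left
  have hCE : (C : Set ℂ) ⊆ ((t.erase y : Finset ℂ) : Set ℂ) := by
    intro x hx
    simp only [hC, Finset.coe_inter, Set.mem_inter_iff, Finset.mem_coe] at hx
    have hxy : x ≠ y := fun h => hyB (h ▸ hx.1)
    simp [Finset.mem_erase, hxy, hx.2]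
  have hPne : ((B \ C).powerset.filter
      (fun D => IsAlgebraic (adjoin ℚ ((C ∪ D : Finset ℂ) : Set ℂ)) y)).Nonempty := by
    refine ⟨B \ C, ?_⟩
    rw [Finset.mem_filter, Finset.mem_powerset]
    refine ⟨subset_rfl, ?_⟩
    rw [Finset.union_sdiff_of_subset hCB]
    exact hB y hyt
  obtain ⟨D, hDmem, hDmin⟩ := Finset.exists_min_image _ Finset.card hPne
  rw [Finset.mem_filter, Finset.mem_powerset] at hDmem
  obtain ⟨hDsub, hDalg⟩ := hDmem
  have hDne : D.Nonempty := by
    rcases Finset.eq_empty_or_nonempty D with h | h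
    · exfalso
      apply htrF
      apply isAlg_mono hCE
      rwa [h, Finset.union_empty] at hDalg
    · exact h
  obtain ⟨b, hbD⟩ := hDne
  have hbBC : b ∈ B \ C := hDsub hbD
  have hbB : b ∈ B := (Finset.mem_sdiff.1 hbBC).1
  have hbC : b ∉ C := (Finset.mem_sdiff.1 hbBC).2
  have hbt : b ∉ t := fun h => hbC (Finset.mem_inter.2 ⟨hbB, h⟩)
  set S := ((C ∪ D.erase b : Finset ℂ) : Set ℂ) with hS
  have h2 : ¬ IsAlgebraic (adjoin ℚ S) y := by
    intro h
    have hm := hDmin (D.erase b) (by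
      rw [Finset.mem_filter, Finset.mem_powerset]
      exact ⟨(Finset.erase_subset _ _).trans hDsub, h⟩)
    have := Finset.card_erase_lt_of_mem hbD
    omega
  have hfin : (C ∪ D : Finset ℂ) = insert b (C ∪ D.erase b) := by
    rw [← Finset.union_insert, Finset.insert_erase hbD]
  have hset : ((C ∪ D : Finset ℂ) : Set ℂ) = S ∪ {b} := by
    rw [Set.union_singleton, hfin, Finset.coe_insert]
  have h1 : IsAlgebraic (adjoin (adjoin ℚ S) ({b} : Set ℂ)) y := by
    have htmp : IsAlgebraic (adjoin ℚ (S ∪ {b})) y := by rw [← hset]; exact hDalg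
    rw [← adjoin_adjoin_left] at htmp
    exact htmp
  have hxchg := exchange h1 h2
  have hb' : IsAlgebraic (adjoin ℚ (S ∪ {y})) b := by
    rw [← adjoin_adjoin_left]
    exact hxchg
  set B' := insert y (B.erase b) with hB'
  have hsub' : S ∪ {y} ⊆ (B' : Set ℂ) := by
    intro x hx
    rcases hx with hx | hx
    · simp only [hS, Finset.coe_union, Set.mem_union, Finset.mem_coe] at hx
      have hxBe : x ∈ B.erase b := by
        rcases hx with hx | hx
        · exact Finset.mem_erase.2 ⟨fun h => hbC (h ▸ hx), hCB hx⟩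
        · have h := Finset.mem_erase.1 hx
          exact Finset.mem_erase.2 ⟨h.1, (Finset.mem_sdiff.1 (hDsub h.2)).1⟩
      rw [hB', Finset.coe_insert]
      exact Set.mem_insert_iff.2 (Or.inr (Finset.mem_coe.2 hxBe))
    · simp [hB', Set.mem_singleton_iff.1 hx]
  have hbB' : IsAlgebraic (adjoin ℚ (B' : Set ℂ)) b := isAlg_mono hsub' hb'
  have hallB' : ∀ x ∈ t, IsAlgebraic (adjoin ℚ (B' : Set ℂ)) x := by
    intro x hx
    have hx1 : IsAlgebraic (adjoin ℚ ((B' : Set ℂ) ∪ {b})) x := by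
      refine isAlg_mono ?_ (hB x hx)
      intro a ha
      by_cases hab : a = b
      · exact Or.inr (by simp [hab])
      · left
        have haB : a ∈ B := Finset.mem_coe.1 ha
        simp [hB', Finset.mem_insert, Finset.mem_erase, hab, haB]
    rw [← adjoin_adjoin_left] at hx1
    exact isAlg_trans_set ({b} : Set ℂ) (by simpa using hbB') hx1
  have hssub : t \ B' ⊂ t \ B := by
    rw [Finset.ssubset_iff_of_subset ?hsub]
    case hsub =>
      intro x hx
      rw [Finset.mem_sdiff] at hx ⊢
      refine ⟨hx.1, fun hxB => hx.2 ?_⟩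
      rw [hB', Finset.mem_insert]
      by_cases hxb : x = b
      · exact absurd (hxb ▸ hx.1) hbt
      · exact Or.inr (Finset.mem_erase.2 ⟨hxb, hxB⟩)
    refine ⟨y, Finset.mem_sdiff.2 ⟨hyt, hyB⟩, fun h => ?_⟩
    exact (Finset.mem_sdiff.1 h).2 (by simp [hB'])
  have hlt : (t \ B').card < k := hk ▸ Finset.card_lt_card hssub
  have hcard := IH _ hlt t B' rfl ht hallB'
  have hBcard : B'.card ≤ B.card := by
    have h1 : y ∉ B.erase b := fun h => hyB (Finset.mem_of_mem_erase h)
    have hpos : 0 < B.card := Finset.card_pos.2 ⟨b, hbB⟩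
    rw [hB', Finset.card_insert_of_notMem h1, Finset.card_erase_of_mem hbB]
    omega
  exact le_trans hcard hBcard

end SchanuelAux

section SchanuelAux2
open IntermediateField
theorem isAlg_of_subfield_subset (K : Subfield ℂ) {F : Type*} [Field F] [Algebra F ℂ]
    (M : IntermediateField F ℂ) (h : (K : Set ℂ) ⊆ (M : Set ℂ)) {y : ℂ}
    (hy : IsAlgebraic K y) : IsAlgebraic M y := by
  let φ : K →+* M :=
    { toFun := fun x => ⟨(x : ℂ), h x.2⟩
      map_one' := rfl
      map_mul' := fun _ _ => rfl
      map_zero' := rfl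
      map_add' := fun _ _ => rfl }
  obtain ⟨p, hp0, hpy⟩ := hy
  refine ⟨p.map φ, ?_, ?_⟩
  · have hφinj : Function.Injective φ := fun a b hab =>
      Subtype.ext (congrArg (fun t : M => (t : ℂ)) hab)
    exact (Polynomial.map_ne_zero_iff hφinj).2 hp0
  · have hcomp : (algebraMap M ℂ).comp φ = algebraMap K ℂ := RingHom.ext fun x => rfl
    rw [Polynomial.aeval_def, Polynomial.eval₂_map, hcomp, ← Polynomial.aeval_def]
    exact hpy

end SchanuelAux2


/-- Assuming Schanuel's conjecture: if `𝒦 ⊆ ℂ` is a subfield of transcendence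
degree at most `d` over `ℚ` (every `ℚ`-algebraically independent finite subset
of `𝒦` has at most `d` elements), and `z₁,…,zₙ` are complex numbers linearly
independent over `ℚ` with each `e^{zᵢ}` algebraic over `𝒦`, then the
transcendence degree of `ℚ(z₁,…,zₙ)` over `ℚ` is at least `n − d`, i.e. among
the `zᵢ` there are at least `n − d` elements algebraically independent over `ℚ`. -/
theorem trdeg_ge_of_schanuel_exp_algebraic
    (hSch : SchanuelConjecture) (d n : ℕ) (𝒦 : Subfield ℂ)
    (h𝒦 : ∀ s : Finset ℂ, (s : Set ℂ) ⊆ (𝒦 : Set ℂ) →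
      AlgebraicIndependent ℚ (fun x : (s : Set ℂ) => (x : ℂ)) → s.card ≤ d)
    (z : Fin n → ℂ) (hz : LinearIndependent ℚ z)
    (halg : ∀ i, IsAlgebraic 𝒦 (Complex.exp (z i))) :
    ∃ s : Finset ℂ, (s : Set ℂ) ⊆ Set.range z ∧ n - d ≤ s.card ∧
      AlgebraicIndependent ℚ (fun x : (s : Set ℂ) => (x : ℂ)) := by
  classical
  obtain ⟨s, hs_sub, hs_card, hs_ind⟩ := hSch n z hz
  set P : ℕ → Prop := fun m => ∃ T : Finset ℂ, (T : Set ℂ) ⊆ (𝒦 : Set ℂ) ∧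
      AlgebraicIndependent ℚ (fun x : (T : Set ℂ) => (x : ℂ)) ∧ T.card = m with hPdef
  have hP0 : P 0 := ⟨∅, by simp, by rw [Finset.coe_empty]; exact algebraicIndependent_empty,
    Finset.card_empty⟩
  obtain ⟨T, hT𝒦, hTind, hTcard⟩ := Nat.findGreatest_spec (P := P) (Nat.zero_le d) hP0
  have hTle : T.card ≤ d := hTcard ▸ Nat.findGreatest_le d
  have hTmax : ∀ x ∈ (𝒦 : Set ℂ), IsAlgebraic (Algebra.adjoin ℚ (T : Set ℂ)) x := by
    intro x hx
    by_cases hxT : x ∈ (T : Set ℂ)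
    · exact isAlgebraic_algebraMap (⟨x, Algebra.subset_adjoin hxT⟩ : Algebra.adjoin ℚ (T : Set ℂ))
    · by_contra htx
      have hins : AlgebraicIndependent ℚ (fun w : (insert x (T : Set ℂ) : Set ℂ) => (w : ℂ)) :=
        (algind_insert_iff hTind hxT).mpr htx
      have hTins : ((insert x T : Finset ℂ) : Set ℂ) = insert x (T : Set ℂ) :=
        Finset.coe_insert x T
      have hcard' : (insert x T).card = T.card + 1 :=
        Finset.card_insert_of_notMem (by simpa using hxT)
      have hgood : ((insert x T : Finset ℂ) : Set ℂ) ⊆ (𝒦 : Set ℂ) := by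
        rw [hTins]; exact Set.insert_subset hx hT𝒦
      have hgood2 : AlgebraicIndependent ℚ
          (fun w : ((insert x T : Finset ℂ) : Set ℂ) => (w : ℂ)) := by
        rw [hTins]; exact hins
      have hle : (insert x T).card ≤ Nat.findGreatest P d :=
        Nat.le_findGreatest (h𝒦 _ hgood hgood2) ⟨insert x T, hgood, hgood2, rfl⟩
      omega
  have h𝒦alg : ∀ y : ℂ, IsAlgebraic 𝒦 y → IsAlgebraic (IntermediateField.adjoin ℚ (T : Set ℂ)) y := by
    intro y hy
    have hKint : ∀ x ∈ (𝒦 : Set ℂ), IsAlgebraic (IntermediateField.adjoin ℚ (T : Set ℂ)) x := fun x hx =>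
      (hTmax x hx).tower_top_of_subalgebra_le (IntermediateField.algebra_adjoin_le_adjoin ℚ _)
    have hyM : IsAlgebraic (IntermediateField.adjoin (IntermediateField.adjoin ℚ (T : Set ℂ)) ((𝒦 : Set ℂ))) y :=
      isAlg_of_subfield_subset 𝒦 _ (IntermediateField.subset_adjoin _ _) hy
    exact isAlg_trans_set _ hKint hyM
  set s₁ := s.filter (fun x => x ∈ Set.range z) with hs₁
  set s₂ := s \ s₁ with hs₂def
  have hs₂alg : ∀ y ∈ s₂, IsAlgebraic (IntermediateField.adjoin ℚ (T : Set ℂ)) y := by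
    intro y hy
    rw [hs₂def, Finset.mem_sdiff] at hy
    have hyr : y ∉ Set.range z := fun hr => hy.2 (Finset.mem_filter.2 ⟨hy.1, hr⟩)
    rcases hs_sub (Finset.mem_coe.2 hy.1) with h | h
    · exact absurd h hyr
    · obtain ⟨i, hi⟩ := h
      exact h𝒦alg y (hi ▸ halg i)
  have hs₂ind : AlgebraicIndependent ℚ (fun x : ((s₂ : Finset ℂ) : Set ℂ) => (x : ℂ)) :=
    hs_ind.mono (by
      intro a ha
      exact Finset.mem_coe.2 (Finset.mem_sdiff.1 (Finset.mem_coe.1 ha)).1)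
  have hs₂card : s₂.card ≤ T.card := card_le_of_algebraic _ s₂ T rfl hs₂ind hs₂alg
  refine ⟨s₁, ?_, ?_, ?_⟩
  · intro a ha
    exact (Finset.mem_filter.1 (Finset.mem_coe.1 ha)).2
  · have hsum : (s \ s₁).card + s₁.card = s.card :=
      Finset.card_sdiff_add_card_eq_card (Finset.filter_subset _ _)
    rw [← hs₂def] at hsum
    omega
  · exact hs_ind.mono (by
      intro a ha
      exact Finset.mem_coe.2 (Finset.filter_subset _ _ (Finset.mem_coe.1 ha)))
end

section
/- Let S_1, S_2 be subsets of ℝ of nonzero real numbers, and let F_i be the subfield of ℝ generated by S_i for i = 1, 2. Suppose there exists a finite set A ⊆ ℝ of positive reals such that every element of S_1 can be written as a·q·s with a ∈ A, q ∈ ℚ, and s ∈ S_2. Then the transcendence degree of the compositum F_1 F_2 over F_2 is at most |A|; in particular, it is finite. -/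
open IntermediateField

/-- Transfer `IsAlgebraic` along an inclusion of coefficient rings inside `E`. -/
theorem myTransfer {E R S : Type*} [Field E] [CommRing R] [CommRing S]
    [Algebra R E] [Algebra S E] (f : R → S)
    (hf : ∀ r, algebraMap S E (f r) = algebraMap R E r)
    (hinjR : Function.Injective (algebraMap R E))
    (hinjS : Function.Injective (algebraMap S E))
    {u : E} (h : IsAlgebraic R u) : IsAlgebraic S u := by
  let f' : R →+* S :=
    { toFun := f
      map_one' := hinjS (by rw [hf]; simp)
      map_mul' := fun a b => hinjS (by simp [hf])
      map_zero' := hinjS (by rw [hf]; simp)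
      map_add' := fun a b => hinjS (by simp [hf]) }
  have hfinj : Function.Injective f' := fun a b hab => hinjR (by rw [← hf, ← hf]; exact congrArg (algebraMap S E) hab)
  have := h.ringHom_of_comp_eq f' (RingHom.id E) hfinj (by ext r; simp [f', hf])
  simpa using this

/-- `IsAlgebraic` over the intermediate field generated by `S` is the same as over the
subalgebra generated by `S` (fraction field argument). -/
theorem key_iff {E : Type*} [Field E] (F : Type*) [Field F] [Algebra F E] (S : Set E) (u : E) :
    IsAlgebraic ↥(IntermediateField.adjoin F S) u ↔ IsAlgebraic ↥(Algebra.adjoin F S) u := by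
  have hle : ∀ x, x ∈ Algebra.adjoin F S → x ∈ IntermediateField.adjoin F S :=
    fun x hx => IntermediateField.algebra_adjoin_le_adjoin F S hx
  have haev : ∀ p : MvPolynomial S F,
      (MvPolynomial.aeval (Subtype.val : S → E) p) ∈ Algebra.adjoin F S := by
    intro p
    have h1 : Algebra.adjoin F (Set.range (Subtype.val : S → E)) =
        (MvPolynomial.aeval (Subtype.val : S → E)).range :=
      Algebra.adjoin_range_eq_range_aeval F _
    rw [Subtype.range_coe] at h1
    rw [h1]
    exact ⟨p, rfl⟩
  letI : Algebra ↥(Algebra.adjoin F S) ↥(IntermediateField.adjoin F S) := RingHom.toAlgebra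
    { toFun := fun a => ⟨a.1, hle a.1 a.2⟩
      map_one' := rfl
      map_mul' := fun _ _ => rfl
      map_zero' := rfl
      map_add' := fun _ _ => rfl }
  haveI : IsScalarTower ↥(Algebra.adjoin F S) ↥(IntermediateField.adjoin F S) E :=
    IsScalarTower.of_algebraMap_eq (fun a => rfl)
  haveI : IsFractionRing ↥(Algebra.adjoin F S) ↥(IntermediateField.adjoin F S) := by
    refine (isLocalization_iff _ _).2 ⟨?_, ?_, ?_⟩
    · rintro ⟨y, hy⟩
      have hy0 : y ≠ 0 := mem_nonZeroDivisors_iff_ne_zero.1 hy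
      refine isUnit_iff_ne_zero.2 ?_
      intro h0
      have h1 := congrArg Subtype.val h0
      exact hy0 (Subtype.ext h1)
    · intro z
      obtain ⟨r, sP, hz⟩ := (IntermediateField.mem_adjoin_iff F (z : E)).1 z.2
      by_cases hq : MvPolynomial.aeval (Subtype.val : S → E) sP = 0
      · have hz0 : (z : E) = 0 := by rw [hz, hq, div_zero]
        refine ⟨⟨0, 1⟩, Subtype.ext ?_⟩
        show (z : E) * _ = _
        simp [hz0]
      · refine ⟨⟨⟨_, haev r⟩, ⟨⟨_, haev sP⟩, mem_nonZeroDivisors_of_ne_zero ?_⟩⟩, Subtype.ext ?_⟩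
        · intro h0
          exact hq (congrArg Subtype.val h0)
        · show (z : E) * _ = _
          rw [hz]
          exact div_mul_cancel₀ _ hq
    · intro x y h
      refine ⟨1, ?_⟩
      have h1 := congrArg Subtype.val h
      simp only [OneMemClass.coe_one, one_mul]
      exact Subtype.ext h1
  exact (IsFractionRing.isAlgebraic_iff (Algebra.adjoin F S) ↥(IntermediateField.adjoin F S) E).symm

/-- tower-down for elements over algebraic field extensions -/
theorem elemTrans {F K E : Type*} [Field F] [Field K] [Field E] [Algebra F K] [Algebra K E]
    [Algebra F E] [IsScalarTower F K E] [Algebra.IsAlgebraic F K] {x : E}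
    (h : IsAlgebraic K x) : IsAlgebraic F x :=
  (isIntegral_trans x h.isIntegral).isAlgebraic

/-- From an algebraically independent set, each element is transcendental over the
subalgebra generated by any subset not containing it. -/
theorem subset_trans_lemma {A R : Type*} [CommRing R] [CommRing A] [Algebra R A]
    {s : Set A} (hind : AlgebraicIndependent R (fun x : s => (x : A))) {v : Set A} (hv : v ⊆ s)
    {i : A} (hi : i ∈ s) (hiv : i ∉ v) : Transcendental (Algebra.adjoin R v) i := by
  classical
  have h1 : AlgebraicIndependent R (fun x : (insert i v : Set A) => (x : A)) :=
    hind.mono (Set.insert_subset hi hv)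
  have h2 : AlgebraicIndependent R (fun x : v => (x : A)) := hind.mono hv
  have h3 : AlgebraicIndependent R (fun o : Option v => o.elim i (fun j => (j : A))) := by
    have h4 := (algebraicIndependent_equiv (Set.subtypeInsertEquivOption hiv).symm).2 h1
    convert h4 using 1
    funext o
    rcases o with _ | j <;> simp [Set.subtypeInsertEquivOption]
  have h5 := (h2.option_iff_transcendental i).1 h3
  rwa [Subtype.range_coe] at h5

/-- Core exchange: if `t` is transcendental over `F` but algebraic over `F(a)`,
then `a` is algebraic over `F(t)`. -/
theorem exch {E : Type*} [Field E] (F : Type*) [Field F] [Algebra F E] {a t : E}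
    (ht : Transcendental F t) (h : IsAlgebraic ↥(IntermediateField.adjoin F ({a} : Set E)) t) :
    IsAlgebraic ↥(IntermediateField.adjoin F ({t} : Set E)) a := by
  by_cases ha : IsAlgebraic F a
  · haveI : Algebra.IsAlgebraic F ↥(IntermediateField.adjoin F ({a} : Set E)) :=
      IntermediateField.isAlgebraic_adjoin_simple ha.isIntegral
    exact absurd (elemTrans h) ht
  · by_contra hta
    have hta' : Transcendental ↥(Algebra.adjoin F ({t} : Set E)) a :=
      fun hal => hta ((key_iff F {t} a).2 hal)
    have h' : IsAlgebraic ↥(Algebra.adjoin F ({a} : Set E)) t := (key_iff F {a} t).1 h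
    have hu2 : AlgebraicIndependent F (fun _ : Unit => t) :=
      algebraicIndependent_unique_type_iff.2 ht
    have hpair : AlgebraicIndependent F (fun o : Option Unit => o.elim a (fun _ => t)) := by
      rw [hu2.option_iff_transcendental a]
      rwa [Set.range_const]
    have hswap : AlgebraicIndependent F (fun o : Option Unit => o.elim t (fun _ => a)) := by
      have h4 := (algebraicIndependent_equiv (Equiv.swap (none : Option Unit) (some ()))).2 hpair
      convert h4 using 1
      funext o
      rcases o with _ | ⟨⟩
      · simp [Equiv.swap_apply_left]
      · simp [Equiv.swap_apply_right]
    have hu1 : AlgebraicIndependent F (fun _ : Unit => a) :=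
      hpair.comp (fun _ : Unit => none) (fun _ _ _ => Subsingleton.elim _ _)
    have h5 := (hu1.option_iff_transcendental t).1 hswap
    rw [Set.range_const] at h5
    exact h5 h'

/-- Pivot lemma: if `t` is transcendental over `F` but algebraic over `F(s)`,
then some `a ∈ s` is algebraic over `F(insert t (s \ {a}))`. -/
theorem pivot {E : Type*} [Field E] [DecidableEq E] (F : Type*) [Field F] [Algebra F E] (s : Finset E) {t : E}
    (ht : Transcendental F t) (h : IsAlgebraic ↥(IntermediateField.adjoin F (↑s : Set E)) t) :
    ∃ a ∈ s, IsAlgebraic ↥(IntermediateField.adjoin F (insert t (↑(s.erase a) : Set E))) a := by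
  classical
  induction s using Finset.induction_on with
  | empty =>
    exfalso
    rw [Finset.coe_empty, IntermediateField.adjoin_empty] at h
    have h2 : IsAlgebraic ↥(⊥ : Subalgebra F E) t := by
      refine myTransfer (S := ↥(⊥ : Subalgebra F E))
        (fun x => ⟨x.1, Algebra.mem_bot.2 (IntermediateField.mem_bot.1 x.2)⟩) (fun r => rfl)
        (by exact fun p q hpq => Subtype.ext hpq) (by exact fun p q hpq => Subtype.ext hpq) h
    exact ht (Subalgebra.isAlgebraic_of_isAlgebraic_bot h2)
  | @insert b s' hb IH =>
    by_cases hts' : IsAlgebraic ↥(IntermediateField.adjoin F (↑s' : Set E)) t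
    · obtain ⟨a, ha, halg⟩ := IH hts'
      refine ⟨a, Finset.mem_insert_of_mem ha, ?_⟩
      have hmono : IntermediateField.adjoin F (insert t (↑(s'.erase a) : Set E)) ≤
          IntermediateField.adjoin F (insert t (↑((insert b s').erase a) : Set E)) := by
        apply IntermediateField.adjoin.mono
        exact Set.insert_subset_insert
          (Finset.coe_subset.2 (Finset.erase_subset_erase a (Finset.subset_insert b s')))
      exact myTransfer
        (S := ↥(IntermediateField.adjoin F (insert t (↑((insert b s').erase a) : Set E))))
        (fun x => ⟨x.1, hmono x.2⟩) (fun r => rfl)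
        (by exact fun p q hpq => Subtype.ext hpq) (by exact fun p q hpq => Subtype.ext hpq) halg
    · have htL : Transcendental ↥(IntermediateField.adjoin F (↑s' : Set E)) t := hts'
      have hcoe : ((insert b s' : Finset E) : Set E) = (↑s' : Set E) ∪ {b} := by
        rw [Finset.coe_insert, Set.insert_eq, Set.union_comm]
      have heq := IntermediateField.adjoin_adjoin_left F (↑s' : Set E) ({b} : Set E)
      have hmem1 : ∀ y, y ∈ IntermediateField.adjoin F ((insert b s' : Finset E) : Set E) →
          y ∈ IntermediateField.adjoin ↥(IntermediateField.adjoin F (↑s' : Set E)) ({b} : Set E) := by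
        intro y hy
        have h3 : y ∈ IntermediateField.restrictScalars F
            (IntermediateField.adjoin ↥(IntermediateField.adjoin F (↑s' : Set E)) ({b} : Set E)) := by
          rw [heq, ← hcoe]; exact hy
        exact (IntermediateField.mem_restrictScalars F).1 h3
      have hb' : IsAlgebraic
          ↥(IntermediateField.adjoin ↥(IntermediateField.adjoin F (↑s' : Set E)) ({b} : Set E)) t :=
        myTransfer
          (S := ↥(IntermediateField.adjoin ↥(IntermediateField.adjoin F (↑s' : Set E)) ({b} : Set E)))
          (fun x => ⟨x.1, hmem1 x.1 x.2⟩) (fun r => rfl)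
          (by exact fun p q hpq => Subtype.ext hpq) (by exact fun p q hpq => Subtype.ext hpq) h
      have hx := exch (↥(IntermediateField.adjoin F (↑s' : Set E))) htL hb'
      refine ⟨b, Finset.mem_insert_self b s', ?_⟩
      rw [Finset.erase_insert hb]
      have heq2 := IntermediateField.adjoin_adjoin_left F (↑s' : Set E) ({t} : Set E)
      have hmem2 : ∀ y, y ∈ IntermediateField.adjoin
          ↥(IntermediateField.adjoin F (↑s' : Set E)) ({t} : Set E) →
          y ∈ IntermediateField.adjoin F (insert t (↑s' : Set E)) := by
        intro y hy
        have h3 := (IntermediateField.mem_restrictScalars F).2 hy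
        rw [heq2] at h3
        rwa [Set.union_comm, ← Set.insert_eq] at h3
      exact myTransfer
        (S := ↥(IntermediateField.adjoin F (insert t (↑s' : Set E))))
        (fun x => ⟨x.1, hmem2 x.1 x.2⟩) (fun r => rfl)
        (by exact fun p q hpq => Subtype.ext hpq) (by exact fun p q hpq => Subtype.ext hpq) hx

theorem step_ind {E F : Type*} [Field E] [Field F] [Algebra F E] [DecidableEq E]
    (T : Finset E) (t₀ : E) (ht₀ : t₀ ∈ T)
    (hind : AlgebraicIndependent F (fun x : (T : Set E) => (x : E))) :
    AlgebraicIndependent ↥(IntermediateField.adjoin F ({t₀} : Set E))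
      (fun x : ((T.erase t₀ : Finset E) : Set E) => (x : E)) := by
  set K := IntermediateField.adjoin F ({t₀} : Set E) with hK
  refine algebraicIndependent_of_finite_type' (by exact fun p q hpq => Subtype.ext hpq) ?_
  intro u hufin _ i hiu
  set X : Set E := (fun x : ((T.erase t₀ : Finset E) : Set E) => (x : E)) '' u with hXdef
  have hXsub : X ⊆ (T : Set E) := by
    rintro _ ⟨j, hj, rfl⟩
    exact Finset.mem_coe.2 (Finset.mem_of_mem_erase (Finset.mem_coe.1 j.2))
  have hit : (i : E) ∈ (T : Set E) :=
    Finset.mem_coe.2 (Finset.mem_of_mem_erase (Finset.mem_coe.1 i.2))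
  have hi1 : (i : E) ≠ t₀ := Finset.ne_of_mem_erase (Finset.mem_coe.1 i.2)
  have hi2 : (i : E) ∉ X := by
    rintro ⟨j, hj, hji⟩
    have hj2 : j = i := Subtype.ext hji
    exact hiu (hj2 ▸ hj)
  have hnotin : (i : E) ∉ insert t₀ X := by
    simp only [Set.mem_insert_iff]
    push_neg
    exact ⟨hi1, hi2⟩
  have htrans := subset_trans_lemma hind
    (Set.insert_subset (Finset.mem_coe.2 ht₀) hXsub) hit hnotin
  have htrans2 : Transcendental ↥(IntermediateField.adjoin F (insert t₀ X)) (i : E) :=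
    fun hal => htrans ((key_iff F (insert t₀ X) i).1 hal)
  intro hal
  apply htrans2
  have hmem : ∀ y, y ∈ Algebra.adjoin ↥K X → y ∈ IntermediateField.adjoin F (insert t₀ X) := by
    intro y hy
    have h1 : y ∈ IntermediateField.adjoin ↥K X :=
      IntermediateField.algebra_adjoin_le_adjoin ↥K X hy
    have h2 := (IntermediateField.mem_restrictScalars F).2 h1
    rw [IntermediateField.adjoin_adjoin_left F ({t₀} : Set E) X] at h2
    rwa [← Set.insert_eq] at h2
  exact myTransfer (S := ↥(IntermediateField.adjoin F (insert t₀ X)))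
    (fun x => ⟨x.1, hmem x.1 x.2⟩) (fun r => rfl)
    (by exact fun p q hpq => Subtype.ext hpq) (by exact fun p q hpq => Subtype.ext hpq) hal

theorem main_lemma {E : Type u} [Field E] [DecidableEq E] :
    ∀ (n : ℕ) (F : Type u) [Field F] [Algebra F E] (s : Finset E), s.card ≤ n →
      ∀ T : Finset E, (∀ t ∈ T, IsAlgebraic ↥(IntermediateField.adjoin F (↑s : Set E)) t) →
      AlgebraicIndependent F (fun x : (T : Set E) => (x : E)) → T.card ≤ n := by
  intro n
  induction n with
  | zero =>
    intro F _ _ s hs T hT hind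
    rcases T.eq_empty_or_nonempty with rfl | ⟨t, ht⟩
    · simp
    exfalso
    have htr : Transcendental F t := hind.transcendental ⟨t, Finset.mem_coe.2 ht⟩
    have h1 := hT t ht
    have hs0 : s = ∅ := Finset.card_eq_zero.1 (Nat.le_zero.1 hs)
    subst hs0
    rw [Finset.coe_empty, IntermediateField.adjoin_empty] at h1
    have h2 : IsAlgebraic ↥(⊥ : Subalgebra F E) t :=
      myTransfer (S := ↥(⊥ : Subalgebra F E))
        (fun x => ⟨x.1, Algebra.mem_bot.2 (IntermediateField.mem_bot.1 x.2)⟩) (fun r => rfl)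
        (by exact fun p q hpq => Subtype.ext hpq) (by exact fun p q hpq => Subtype.ext hpq) h1
    exact htr (Subalgebra.isAlgebraic_of_isAlgebraic_bot h2)
  | succ n IH =>
    intro F _ _ s hs T hT hind
    rcases T.eq_empty_or_nonempty with rfl | ⟨t₀, ht₀⟩
    · simp
    have htr : Transcendental F t₀ := hind.transcendental ⟨t₀, Finset.mem_coe.2 ht₀⟩
    obtain ⟨a, has, hpa⟩ := pivot F s htr (hT t₀ ht₀)
    set K := IntermediateField.adjoin F ({t₀} : Set E) with hK
    set X : Set E := (↑(s.erase a) : Set E) with hX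
    set M := IntermediateField.adjoin ↥K X with hM
    have hmemM : ∀ y, y ∈ IntermediateField.adjoin F (insert t₀ X) → y ∈ M := by
      intro y hy
      have h2 : y ∈ IntermediateField.restrictScalars F M := by
        rw [hM, IntermediateField.adjoin_adjoin_left F ({t₀} : Set E) X, ← Set.insert_eq]
        exact hy
      exact (IntermediateField.mem_restrictScalars F).1 h2
    have ha' : IsAlgebraic ↥M a :=
      myTransfer (S := ↥M) (fun x => ⟨x.1, hmemM x.1 x.2⟩) (fun r => rfl)
        (by exact fun p q hpq => Subtype.ext hpq) (by exact fun p q hpq => Subtype.ext hpq) hpa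
    set N := IntermediateField.adjoin ↥M ({a} : Set E) with hN
    haveI : Algebra.IsAlgebraic ↥M ↥N := IntermediateField.isAlgebraic_adjoin_simple ha'.isIntegral
    have hsubN : ∀ y, y ∈ IntermediateField.adjoin F (↑s : Set E) → y ∈ N := by
      intro y hy
      have hle : (IntermediateField.adjoin F (↑s : Set E)).toSubfield ≤ N.toSubfield := by
        rw [IntermediateField.adjoin_toSubfield]
        apply Subfield.closure_le.2
        rintro x hx
        rcases hx with ⟨f, rfl⟩ | hxs
        · have m1 : algebraMap F E f ∈ K := K.algebraMap_mem f
          have m2 : algebraMap F E f ∈ M := M.algebraMap_mem ⟨algebraMap F E f, m1⟩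
          exact N.algebraMap_mem ⟨algebraMap F E f, m2⟩
        · by_cases hxa : x = a
          · subst hxa
            exact IntermediateField.subset_adjoin _ _ (Set.mem_singleton x)
          · have hxM : x ∈ M := IntermediateField.subset_adjoin _ _
              (by rw [hX]; exact Finset.mem_coe.2 (Finset.mem_erase.2 ⟨hxa, hxs⟩))
            exact N.algebraMap_mem ⟨x, hxM⟩
      exact hle hy
    have hTM : ∀ t ∈ T, IsAlgebraic ↥M t := by
      intro t ht
      have h3 : IsAlgebraic ↥N t :=
        myTransfer (S := ↥N) (fun x => ⟨x.1, hsubN x.1 x.2⟩) (fun r => rfl)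
          (by exact fun p q hpq => Subtype.ext hpq) (by exact fun p q hpq => Subtype.ext hpq)
          (hT t ht)
      exact elemTrans h3
    have hind' := step_ind T t₀ ht₀ hind
    have hcard := IH ↥K (s.erase a) (by rw [Finset.card_erase_of_mem has]; omega) (T.erase t₀)
      (fun t ht => hTM t (Finset.mem_of_mem_erase ht)) hind'
    have h4 := Finset.card_erase_of_mem ht₀
    have h5 : 0 < T.card := Finset.card_pos.2 ⟨t₀, ht₀⟩
    omega

/-- If `S₁, S₂ ⊆ ℝ` consist of nonzero reals, `Fᵢ` is the subfield of `ℝ`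
generated by `Sᵢ`, and there is a finite set `A` of positive reals such that
every element of `S₁` has the form `a·q·s` with `a ∈ A`, `q ∈ ℚ`, `s ∈ S₂`,
then the transcendence degree of the compositum `F₁F₂` over `F₂` is at most
`|A|` (in particular finite): every finite subset of `F₁ ⊔ F₂` that is
algebraically independent over `F₂` has at most `|A|` elements. -/
theorem trdeg_compositum_le_of_similar
    (S₁ S₂ : Set ℝ) (hS₁ : ∀ x ∈ S₁, x ≠ 0) (hS₂ : ∀ x ∈ S₂, x ≠ 0)
    (A : Finset ℝ) (hA : ∀ a ∈ A, 0 < a)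
    (hsim : ∀ x ∈ S₁, ∃ a ∈ A, ∃ q : ℚ, ∃ s ∈ S₂, x = a * (q : ℝ) * s) :
    ∀ T : Finset ℝ,
      (T : Set ℝ) ⊆ ((Subfield.closure S₁ ⊔ Subfield.closure S₂ : Subfield ℝ) : Set ℝ) →
      AlgebraicIndependent (Subfield.closure S₂) (fun x : (T : Set ℝ) => (x : ℝ)) →
      T.card ≤ A.card := by
  classical
  intro T hTsub hind
  set L := IntermediateField.adjoin ↥(Subfield.closure S₂) (↑A : Set ℝ) with hL
  have hsup : (Subfield.closure S₁ ⊔ Subfield.closure S₂ : Subfield ℝ) ≤ L.toSubfield := by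
    apply sup_le
    · apply Subfield.closure_le.2
      intro x hx
      obtain ⟨a, haA, q, s, hsS, rfl⟩ := hsim x hx
      have h1 : (a : ℝ) ∈ L :=
        IntermediateField.subset_adjoin _ _ (Finset.mem_coe.2 haA)
      have h2 : ((q : ℝ) : ℝ) ∈ L := by
        have hq2 : (q : ℝ) ∈ Subfield.closure S₂ := SubfieldClass.ratCast_mem _ q
        exact L.algebraMap_mem ⟨(q : ℝ), hq2⟩
      have h3 : s ∈ L := by
        have hs2 : s ∈ Subfield.closure S₂ := Subfield.subset_closure hsS
        exact L.algebraMap_mem ⟨s, hs2⟩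
      exact mul_mem (mul_mem h1 h2) h3
    · intro x hx
      exact L.algebraMap_mem ⟨x, hx⟩
  have halg : ∀ t ∈ T, IsAlgebraic ↥L t := by
    intro t ht
    have hmem : t ∈ L := hsup (hTsub (Finset.mem_coe.2 ht))
    exact isAlgebraic_algebraMap (⟨t, hmem⟩ : ↥L)
  exact main_lemma A.card ↥(Subfield.closure S₂) A le_rfl T halg hind
end

section
/- Let L be a field and let K_1, ..., K_m be finite Galois extensions of L contained in a common field with [K_1 ⋯ K_m : L] = ∏_{i=1}^m [K_i : L]. If a_i ∈ K_i^× for each i and the product a_1 ⋯ a_m lies in L, then each a_i lies in L. -/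
open Module IntermediateField

private lemma finrank_biSup_le {L Ω : Type*} [Field L] [Field Ω] [Algebra L Ω] {m : ℕ}
    (K : Fin m → IntermediateField L Ω) [∀ i, FiniteDimensional L (K i)]
    (s : Finset (Fin m)) :
    finrank L ↥(⨆ j ∈ s, K j) ≤ ∏ j ∈ s, finrank L (K j) := by
  classical
  induction s using Finset.induction with
  | empty =>
    rw [show (⨆ j ∈ (∅ : Finset (Fin m)), K j) = ⊥ by simp]
    simp [IntermediateField.finrank_bot]
  | @insert i s hi ih =>
    rw [Finset.prod_insert hi]
    have h1 : (⨆ j ∈ insert i s, K j) = K i ⊔ ⨆ j ∈ s, K j := by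
      simp_rw [Finset.mem_insert]
      simp_rw [iSup_or, iSup_sup_eq, iSup_iSup_eq_left]
    rw [h1]
    calc finrank L ↥(K i ⊔ ⨆ j ∈ s, K j)
        ≤ finrank L (K i) * finrank L ↥(⨆ j ∈ s, K j) := finrank_sup_le _ _
      _ ≤ finrank L (K i) * ∏ j ∈ s, finrank L (K j) := Nat.mul_le_mul_left _ ih

/-- Let `K₁, …, Kₘ` be finite Galois extensions of `L` inside a common field
`Ω` with `[K₁⋯Kₘ : L] = ∏ [Kᵢ : L]`. If `aᵢ ∈ Kᵢ` are nonzero and the product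
`a₁ ⋯ aₘ` lies in `L`, then each `aᵢ` lies in `L`. -/
theorem mem_bot_of_prod_mem_bot_of_linearly_disjoint
    (L Ω : Type*) [Field L] [Field Ω] [Algebra L Ω] (m : ℕ)
    (K : Fin m → IntermediateField L Ω)
    [∀ i, IsGalois L (K i)] [∀ i, FiniteDimensional L (K i)]
    (hdeg : Module.finrank L ↥(⨆ i, K i) = ∏ i, Module.finrank L (K i))
    (a : Fin m → Ω) (ha : ∀ i, a i ∈ K i) (ha0 : ∀ i, a i ≠ 0)
    (hprod : (∏ i, a i) ∈ (⊥ : IntermediateField L Ω)) :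
    ∀ i, a i ∈ (⊥ : IntermediateField L Ω) := by
  classical
  intro i
  set B : IntermediateField L Ω := ⨆ j ∈ Finset.univ.erase i, K j with hB
  haveI : FiniteDimensional L B := by
    rw [hB]
    exact IntermediateField.finiteDimensional_iSup_of_finset
  have hsup : (⨆ j, K j) = K i ⊔ B := by
    apply le_antisymm
    · refine iSup_le fun j => ?_
      by_cases h : j = i
      · subst h; exact le_sup_left
      · exact le_trans (le_iSup₂ (f := fun j (_ : j ∈ Finset.univ.erase i) => K j) j
          (Finset.mem_erase.2 ⟨h, Finset.mem_univ j⟩)) le_sup_right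
    · exact sup_le (le_iSup K i) (iSup₂_le fun j _ => le_iSup K j)
  have htot : finrank L ↥(K i ⊔ B) = ∏ j, finrank L (K j) := by rw [← hsup]; exact hdeg
  have hle : finrank L ↥(K i ⊔ B) ≤ finrank L (K i) * finrank L B :=
    finrank_sup_le _ _
  have hge : finrank L (K i) * finrank L B ≤ finrank L ↥(K i ⊔ B) := by
    rw [htot, ← Finset.mul_prod_erase _ _ (Finset.mem_univ i)]
    exact Nat.mul_le_mul_left _ (finrank_biSup_le K _)
  have hdisj : (K i).LinearDisjoint B :=
    IntermediateField.LinearDisjoint.of_finrank_sup (le_antisymm hle hge)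
  have hinf : K i ⊓ B = ⊥ := hdisj.inf_eq_bot
  -- now show a i ∈ B
  have hrest : (∏ j ∈ Finset.univ.erase i, a j) ∈ B := by
    apply prod_mem
    intro j hj
    exact (le_iSup₂ (f := fun j (_ : j ∈ Finset.univ.erase i) => K j) j hj) (ha j)
  have hrest0 : (∏ j ∈ Finset.univ.erase i, a j) ≠ 0 :=
    Finset.prod_ne_zero_iff.2 fun j _ => ha0 j
  have hib : a i ∈ B := by
    have h1 : (∏ j, a j) ∈ B := (bot_le : ⊥ ≤ B) hprod
    have h2 : a i = (∏ j, a j) * (∏ j ∈ Finset.univ.erase i, a j)⁻¹ := by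
      rw [← Finset.mul_prod_erase _ _ (Finset.mem_univ i), mul_assoc,
        mul_inv_cancel₀ hrest0, mul_one]
    rw [h2]
    exact mul_mem h1 (inv_mem hrest)
  rw [← hinf]
  exact ⟨ha i, hib⟩
end
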